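/- Let d₁,…,d_n be positive integers, L = lcm(d₁,…,d_n), and C an additive subgroup of (ℤ_{d₁}×…×ℤ_{d_n})². Write elements as (α,β). If for all (α,β),(α',β') ∈ C one has Σ_i (L/d_i)(α_i β'_i + α'_i β_i) ≡ 0 mod L, then the Construction A lattice { ((α_i + d_i k_i)/√d_i)_i , ((β_i + d_i k'_i)/√d_i)_i : (α,β) ∈ C, k,k' ∈ ℤ^n } is integral with respect to the Lorentzian form ⟨(x,y),(x',y')⟩ = x·y' + y·x', i.e. all pairings of lattice vectors lie in ℤ. -/

import Mathlib

theorem nonhomogeneous_constructionA_integral (n : ℕ) (d : Fin n → ℕ)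
    (hd : ∀ i, 0 < d i)
    (C : Set ((∀ i, ZMod (d i)) × (∀ i, ZMod (d i))))
    (L : ℕ) (hL : L = Finset.univ.lcm d)
    (hC : ∀ c ∈ C, ∀ c' ∈ C,
      (L : ℤ) ∣ ∑ i, (L / d i : ℕ) *
        (((c.1 i).val : ℤ) * ((c'.2 i).val : ℤ) + ((c'.1 i).val : ℤ) * ((c.2 i).val : ℤ))) :
    let Λ : Set ((Fin n → ℝ) × (Fin n → ℝ)) :=
      {v | ∃ c ∈ C, ∃ k k' : Fin n → ℤ,
        v = ((fun i => (((c.1 i).val : ℝ) + d i * k i) / Real.sqrt (d i)),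
             (fun i => (((c.2 i).val : ℝ) + d i * k' i) / Real.sqrt (d i)))}
    ∀ v ∈ Λ, ∀ w ∈ Λ, ∃ z : ℤ,
      (∑ i, (v.1 i * w.2 i + v.2 i * w.1 i)) = z := by
  intro Λ v hv w hw
  obtain ⟨c, hc, k, k', rfl⟩ := hv
  obtain ⟨c', hc', l, l', rfl⟩ := hw
  obtain ⟨m, hm⟩ := hC c hc c' hc'
  have hdvd : ∀ i, d i ∣ L := fun i => hL ▸ Finset.dvd_lcm (Finset.mem_univ i)
  have hLne : (L : ℝ) ≠ 0 := by
    have : L ≠ 0 := by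
      rw [hL]
      intro h
      rcases (Finset.lcm_eq_zero_iff).mp h with ⟨i, _, hi⟩
      exact (hd i).ne' hi
    exact_mod_cast this
  set a : Fin n → ℤ := fun i => ((c.1 i).val : ℤ)
  set b : Fin n → ℤ := fun i => ((c.2 i).val : ℤ)
  set a' : Fin n → ℤ := fun i => ((c'.1 i).val : ℤ)
  set b' : Fin n → ℤ := fun i => ((c'.2 i).val : ℤ)
  set A : Fin n → ℤ := fun i => a i * b' i + a' i * b i
  set E : Fin n → ℤ := fun i => a i * l' i + k i * b' i + (d i : ℤ) * (k i * l' i)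
      + b i * l i + k' i * a' i + (d i : ℤ) * (k' i * l i)
  refine ⟨m + ∑ i, E i, ?_⟩
  have hterm : ∀ i, ((((c.1 i).val : ℝ) + d i * k i) / Real.sqrt (d i)) *
      ((((c'.2 i).val : ℝ) + d i * l' i) / Real.sqrt (d i)) +
      ((((c.2 i).val : ℝ) + d i * k' i) / Real.sqrt (d i)) *
      ((((c'.1 i).val : ℝ) + d i * l i) / Real.sqrt (d i)) =
      ((A i : ℝ)) / (d i : ℝ) + (E i : ℝ) := by
    intro i
    have hdpos : (0 : ℝ) < (d i : ℝ) := by exact_mod_cast hd i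
    have hsq : Real.sqrt (d i) * Real.sqrt (d i) = (d i : ℝ) :=
      Real.mul_self_sqrt hdpos.le
    have hsne : Real.sqrt (d i) ≠ 0 := by
      intro h
      rw [h, mul_comm] at hsq
      simp at hsq
      exact hdpos.ne' hsq.symm
    field_simp
    simp only [A, E, a, b, a', b']
    push_cast
    linear_combination (-((d i : ℝ) * ((c.1 i).val : ℝ) * (l' i : ℝ) + (d i : ℝ) * (k i : ℝ) * ((c'.2 i).val : ℝ)
      + (d i : ℝ) * ((c.2 i).val : ℝ) * (l i : ℝ) + (d i : ℝ) * (k' i : ℝ) * ((c'.1 i).val : ℝ)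
      + (d i : ℝ) ^ 2 * (k i : ℝ) * (l' i : ℝ) + (d i : ℝ) ^ 2 * (k' i : ℝ) * (l i : ℝ)
      + ((c.1 i).val : ℝ) * ((c'.2 i).val : ℝ) + ((c.2 i).val : ℝ) * ((c'.1 i).val : ℝ)))
      * (Real.sq_sqrt hdpos.le)
  rw [Finset.sum_congr rfl fun i _ => hterm i, Finset.sum_add_distrib]
  have hAsum : (∑ i, ((A i : ℝ)) / (d i : ℝ)) = (m : ℝ) := by
    have hstep : ∀ i ∈ Finset.univ, (L : ℝ) * (((A i : ℝ)) / (d i : ℝ)) =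
        (((L / d i : ℕ) * A i : ℤ) : ℝ) := by
      intro i _
      have hdne : (d i : ℝ) ≠ 0 := by exact_mod_cast (hd i).ne'
      have hcast : ((L / d i : ℕ) : ℝ) = (L : ℝ) / (d i : ℝ) :=
        Nat.cast_div (hdvd i) hdne
      rw [Int.cast_mul, Int.cast_natCast, hcast]
      field_simp
    have h1 : (L : ℝ) * (∑ i, ((A i : ℝ)) / (d i : ℝ)) = (L : ℝ) * (m : ℝ) := by
      rw [Finset.mul_sum, Finset.sum_congr rfl hstep, ← Int.cast_sum]
      rw [show (∑ i, ((L / d i : ℕ) : ℤ) * A i) = (L : ℤ) * m from hm]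
      push_cast
      ring
    exact mul_left_cancel₀ hLne h1
  rw [hAsum]
  push_cast
  ring
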